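/- Let 1 ≤ k1 ≤ t1 ≤ min(n1, m), 1 ≤ k2 ≤ t2 ≤ min(n2, m), t1·t2 ≤ m, and t1 − k1 ≤ t2 − k2. Let g1 ∈ L^{n1} with wt_R(g1) = t1 and g2 ∈ L^{n2} with wt_R(g2) = t2, and let C be the row space of Moore(g1,k1) ⊗ Moore(g2,k2). Let r be a natural number with 2r ≤ t2 − k2. Then for every vector y indexed by {1..n1}×{1..n2} with entries in L and all codewords c, c' ∈ C with wt_R(y − c) ≤ r and wt_R(y − c') ≤ r, one has c = c'. (That is, the extended Gabidulin–Kronecker product code corrects every error of rank weight within half of its guaranteed minimum-distance lower bound t2 − k2 + 1 uniquely.) -/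

import Mathlib

open Matrix Kronecker

noncomputable def rankWeight (K : Type*) {L : Type*} [Field K] [Field L] [Algebra K L]
    {ι : Type*} (v : ι → L) : ℕ :=
  Module.finrank K (Submodule.span K (Set.range v))

def moore (q : ℕ) {L : Type*} [Field L] {n : ℕ} (g : Fin n → L) (k : ℕ) :
    Matrix (Fin k) (Fin n) L :=
  Matrix.of fun i j => g j ^ q ^ (i : ℕ)

theorem egk_unique_decoding_case2
    (q m n1 k1 n2 k2 t1 t2 r : ℕ)
    (K L : Type*) [Field K] [Fintype K] [Field L] [Algebra K L]
    (hq : Fintype.card K = q) (hm : Module.finrank K L = m)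
    (hk1pos : 1 ≤ k1) (hk1t1 : k1 ≤ t1) (ht1 : t1 ≤ min n1 m)
    (hk2pos : 1 ≤ k2) (hk2t2 : k2 ≤ t2) (ht2 : t2 ≤ min n2 m)
    (htm : t1 * t2 ≤ m) (hd : t1 - k1 ≤ t2 - k2)
    (g1 : Fin n1 → L) (hg1 : rankWeight K g1 = t1)
    (g2 : Fin n2 → L) (hg2 : rankWeight K g2 = t2)
    (hr : 2 * r ≤ t2 - k2) :
    ∀ y c c' : Fin n1 × Fin n2 → L,
      (∃ x : Fin k1 × Fin k2 → L, c = x ᵥ* (moore q g1 k1 ⊗ₖ moore q g2 k2)) →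
      (∃ x : Fin k1 × Fin k2 → L, c' = x ᵥ* (moore q g1 k1 ⊗ₖ moore q g2 k2)) →
      rankWeight K (y - c) ≤ r → rankWeight K (y - c') ≤ r → c = c' := by
  intro y c c' hc hc' hyc hyc'
  -- basic finiteness
  have hm1 : 0 < m := lt_of_lt_of_le (lt_of_lt_of_le hk1pos hk1t1) (le_trans ht1 (min_le_right _ _))
  haveI hfd : Module.Finite K L := Module.finite_of_finrank_pos (by rw [hm]; exact hm1)
  haveI : Finite L := Module.finite_of_finite K
  haveI : Fintype L := Fintype.ofFinite L
  haveI : DecidableEq L := Classical.decEq L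
  -- characteristic
  haveI : CharP K (ringChar K) := ringChar.charP K
  obtain ⟨s, hpp, hcardK⟩ := FiniteField.card K (ringChar K)
  set p := ringChar K with hp
  haveI : Fact p.Prime := ⟨hpp⟩
  haveI : CharP L p := charP_of_injective_algebraMap (algebraMap K L).injective p
  have hqp : q = p ^ (s : ℕ) := by rw [← hq, hcardK]
  have hq2 : 2 ≤ q := by rw [← hq]; exact Fintype.one_lt_card
  have hadd : ∀ (i : ℕ) (a b : L), (a + b) ^ q ^ i = a ^ q ^ i + b ^ q ^ i := by
    intro i a b
    simp only [hqp, ← pow_mul]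
    exact add_pow_char_pow a b p ((s : ℕ) * i)
  have hsm : ∀ (i : ℕ) (a : K) (x : L),
      (algebraMap K L a * x) ^ q ^ i = algebraMap K L a * x ^ q ^ i := by
    intro i a x
    have ha : a ^ q ^ i = a := by rw [← hq]; exact FiniteField.pow_card_pow i a
    rw [mul_pow, ← map_pow, ha]
  -- the difference codeword
  by_contra hne
  have hczero : c - c' ≠ 0 := sub_ne_zero.mpr hne
  obtain ⟨x1, hc1⟩ := hc
  obtain ⟨x2, hc2⟩ := hc'
  have hcc : c - c' = (x1 - x2) ᵥ* (moore q g1 k1 ⊗ₖ moore q g2 k2) := by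
    rw [hc1, hc2, Matrix.sub_vecMul]
  obtain ⟨⟨j1, j2⟩, hj⟩ := Function.ne_iff.mp hczero
  set z : Fin k1 × Fin k2 → L := x1 - x2 with hz
  set b : Fin k2 → L := fun i2 => ∑ i1 : Fin k1, z (i1, i2) * g1 j1 ^ q ^ (i1 : ℕ) with hb
  have hentry : ∀ j2' : Fin n2,
      (c - c') (j1, j2') = ∑ i2 : Fin k2, b i2 * g2 j2' ^ q ^ (i2 : ℕ) := by
    intro j2'
    rw [hcc]
    simp only [Matrix.vecMul, dotProduct, Matrix.kroneckerMap_apply, moore,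
      Matrix.of_apply, Fintype.sum_prod_type, hb, Finset.sum_mul, mul_assoc]
    rw [Finset.sum_comm]
  -- the q-polynomial linear map
  set ψ : L →ₗ[K] L :=
    { toFun := fun v => ∑ i2 : Fin k2, b i2 * v ^ q ^ (i2 : ℕ)
      map_add' := by
        intro a b'
        simp only [hadd, mul_add, Finset.sum_add_distrib]
      map_smul' := by
        intro a v
        simp only [Algebra.smul_def, RingHom.id_apply, hsm, Finset.mul_sum, mul_left_comm] }
    with hψ
  have hψg2 : ∀ j', ψ (g2 j') = (c - c') (j1, j') := by
    intro j'
    rw [hentry j']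
    rfl
  -- the relevant spaces
  set S := Submodule.span K (Set.range (c - c')) with hS
  set V2 := Submodule.span K (Set.range g2) with hV2
  set φ : V2 →ₗ[K] L := ψ.comp V2.subtype with hφ
  have hrange : LinearMap.range φ ≤ S := by
    rw [hφ, LinearMap.range_comp, Submodule.range_subtype, hV2, Submodule.map_span,
      Submodule.span_le]
    rintro _ ⟨_, ⟨j', rfl⟩, rfl⟩
    rw [hψg2]
    exact Submodule.subset_span ⟨(j1, j'), rfl⟩
  have hrank : Module.finrank K (LinearMap.range φ) + Module.finrank K (LinearMap.ker φ)
      = t2 := by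
    rw [LinearMap.finrank_range_add_finrank_ker φ]
    exact hg2
  -- some coefficient is nonzero
  have hbne : ∃ i0 : Fin k2, b i0 ≠ 0 := by
    by_contra hall
    push_neg at hall
    apply hj
    rw [hentry j2]
    simp [hall]
  obtain ⟨i0, hi0⟩ := hbne
  -- the polynomial
  set P : Polynomial L := ∑ i2 : Fin k2, Polynomial.C (b i2) * Polynomial.X ^ (q ^ (i2 : ℕ))
    with hP
  have hcoeff : P.coeff (q ^ (i0 : ℕ)) = b i0 := by
    rw [hP, Polynomial.finset_sum_coeff]
    rw [Finset.sum_eq_single i0]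
    · simp [Polynomial.coeff_C_mul, Polynomial.coeff_X_pow]
    · intro i2 _ hne'
      have hne2 : ¬ (q ^ (i0 : ℕ) = q ^ (i2 : ℕ)) := by
        intro h
        exact hne' (Fin.ext (Nat.pow_right_injective hq2 h)).symm
      simp [Polynomial.coeff_C_mul, Polynomial.coeff_X_pow, hne2]
    · intro h
      exact absurd (Finset.mem_univ i0) h
  have hPne : P ≠ 0 := by
    intro h
    rw [h, Polynomial.coeff_zero] at hcoeff
    exact hi0 hcoeff.symm
  have hdeg : P.natDegree ≤ q ^ (k2 - 1) := by
    apply Polynomial.natDegree_sum_le_of_forall_le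
    intro i2 _
    refine le_trans (Polynomial.natDegree_C_mul_X_pow_le _ _) ?_
    exact Nat.pow_le_pow_right (lt_of_lt_of_le Nat.zero_lt_two hq2)
      (Nat.le_pred_of_lt i2.isLt)
  have heval : ∀ v : L, P.eval v = ψ v := by
    intro v
    rw [hP, Polynomial.eval_finset_sum]
    simp [hψ]
  -- kernel bound via roots
  haveI : Fintype ↥(LinearMap.ker φ) := Fintype.ofFinite _
  have hcardker : Fintype.card ↥(LinearMap.ker φ) ≤ q ^ (k2 - 1) := by
    have hmem : ∀ w : ↥(LinearMap.ker φ), (((w : ↥V2) : L)) ∈ P.roots.toFinset := by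
      intro w
      rw [Multiset.mem_toFinset, Polynomial.mem_roots hPne, Polynomial.IsRoot.def, heval]
      exact w.2
    have hinj : Function.Injective
        (fun w : ↥(LinearMap.ker φ) => (⟨((w : ↥V2) : L), hmem w⟩ : ↥P.roots.toFinset)) := by
      intro w1 w2 h
      simp only [Subtype.mk.injEq] at h
      exact Subtype.ext (Subtype.ext h)
    refine le_trans (Fintype.card_le_of_injective _ hinj) ?_
    rw [Fintype.card_coe]
    exact le_trans (Multiset.toFinset_card_le _) (le_trans (Polynomial.card_roots' P) hdeg)
  have hkerfin : Module.finrank K (LinearMap.ker φ) ≤ k2 - 1 := by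
    rw [← Nat.pow_le_pow_iff_right (lt_of_lt_of_le Nat.one_lt_two hq2) (n := Module.finrank K (LinearMap.ker φ)) (m := k2 - 1)]
    calc q ^ Module.finrank K ↥(LinearMap.ker φ)
        = Fintype.card ↥(LinearMap.ker φ) := by
          haveI : Module.Free K ↥(LinearMap.ker φ) := Module.Free.of_divisionRing K ↥(LinearMap.ker φ)
          rw [Module.card_fintype (Module.finBasis K ↥(LinearMap.ker φ)), hq, Fintype.card_fin]
      _ ≤ q ^ (k2 - 1) := hcardker
  -- lower bound on rank weight of c - c'
  have hlow : t2 - (k2 - 1) ≤ Module.finrank K S := by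
    have h1 := Submodule.finrank_mono hrange
    omega
  -- triangle inequality
  have htri : Module.finrank K S ≤ rankWeight K (y - c') + rankWeight K (y - c) := by
    have hle : S ≤ Submodule.span K (Set.range (y - c')) ⊔ Submodule.span K (Set.range (y - c)) := by
      rw [hS, Submodule.span_le]
      rintro _ ⟨i, rfl⟩
      have h1 : (c - c') i = (y - c') i - (y - c) i := by
        simp only [Pi.sub_apply]
        ring
      rw [h1]
      exact sub_mem (Submodule.mem_sup_left (Submodule.subset_span ⟨i, rfl⟩))
        (Submodule.mem_sup_right (Submodule.subset_span ⟨i, rfl⟩))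
    have h2 := Submodule.finrank_mono hle
    have h3 := Submodule.finrank_sup_add_finrank_inf_eq
      (Submodule.span K (Set.range (y - c'))) (Submodule.span K (Set.range (y - c)))
    unfold rankWeight
    omega
  omega
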